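/- For n ≥ 1, the coefficient identity: writing the Hadamard-walk path sum Ξ_{2n}(n,n) (sum over all products of n copies of P = (1/√2)[[1,1],[0,0]] and n copies of Q = (1/√2)[[0,0],[1,−1]]) in the basis {P, Q, R, S} with R = (1/√2)[[1,−1],[0,0]], S = (1/√2)[[0,0],[1,1]], the R-coefficient equals (1/√2)^{2n-1} ∑_{γ=1}^{n} (−1)^{n−γ} C(n−1, γ−1)², and it equals the S-coefficient. -/

import Mathlib

open Matrix

/-- Sum over all products of n copies of P and n copies of Q (in every order),
the Hadamard-walk path sum, as a real matrix. -/
noncomputable def hadamardXi (n : ℕ) : Matrix (Fin 2) (Fin 2) ℝ :=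
  ∑ w ∈ Finset.univ.filter
      (fun w : Fin (2 * n) → Bool => (Finset.univ.filter fun i => w i = true).card = n),
    (List.ofFn fun i : Fin (2 * n) =>
      if w i then !![(0 : ℝ), 0; 1 / Real.sqrt 2, -(1 / Real.sqrt 2)]
      else !![(1 / Real.sqrt 2 : ℝ), 1 / Real.sqrt 2; 0, 0]).prod

noncomputable section HadamardAux
open Polynomial Finset

/-- unscaled P -/
def hPm : Matrix (Fin 2) (Fin 2) ℝ := !![1,1;0,0]
/-- unscaled Q -/
def hQm : Matrix (Fin 2) (Fin 2) ℝ := !![0,0;1,-1]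
/-- polynomial transfer matrix -/
def hNm : Matrix (Fin 2) (Fin 2) ℝ[X] := !![1,1;X,-X]

/-- expansion of a power of a sum into words -/
lemma sum_words {S : Type*} [Semiring S] (f : Bool → S) :
    ∀ k : ℕ, ∑ w : Fin k → Bool, (List.ofFn fun i => f (w i)).prod = (f false + f true) ^ k := by
  intro k
  induction k with
  | zero => simp
  | succ k ih =>
    rw [← Fintype.sum_equiv (Fin.consEquiv (fun _ : Fin (k+1) => Bool))
      (fun p : Bool × (Fin k → Bool) => (List.ofFn fun i => f ((Fin.cons p.1 p.2 : Fin (k+1) → Bool) i)).prod)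
      (fun w => (List.ofFn fun i => f (w i)).prod) (fun p => by cases p; rfl)]
    rw [Fintype.sum_prod_type]
    simp only [List.ofFn_succ, List.prod_cons, Fin.cons_zero, Fin.cons_succ]
    simp only [← Finset.mul_sum, ih]
    rw [Fintype.sum_bool, pow_succ', ← add_mul, add_comm (f true)]

lemma card_trues_cons {k : ℕ} (b : Bool) (w : Fin k → Bool) :
    (Finset.univ.filter fun i => (Fin.cons b w : Fin (k+1) → Bool) i = true).card
      = (if b then 1 else 0) + (Finset.univ.filter fun i => w i = true).card := by
  rw [Finset.card_filter, Finset.card_filter, Fin.sum_univ_succ]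
  simp

/-- word factorization lemma -/
lemma word_factor : ∀ (k : ℕ) (w : Fin k → Bool),
    (List.ofFn fun i => if w i then (!![0,0;X,-X] : Matrix (Fin 2) (Fin 2) ℝ[X])
        else !![1,1;0,0]).prod
      = (X : ℝ[X]) ^ ((Finset.univ.filter fun i => w i = true).card) •
        ((List.ofFn fun i => if w i then hQm else hPm).prod).map (Polynomial.C) := by
  intro k
  induction k with
  | zero => intro w; simp [Matrix.map_one]
  | succ k ih =>
    intro w
    rw [List.ofFn_succ, List.ofFn_succ, List.prod_cons, List.prod_cons]
    have hw : ∀ i : Fin k, (w i.succ) = (Fin.tail w) i := fun i => rfl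
    simp only [hw]
    rw [ih (Fin.tail w)]
    have hcard := card_trues_cons (w 0) (Fin.tail w)
    rw [Fin.cons_self_tail w] at hcard
    rw [hcard]
    have hfirst : (if w 0 then (!![0,0;X,-X] : Matrix (Fin 2) (Fin 2) ℝ[X]) else !![1,1;0,0])
        = (X:ℝ[X]) ^ (if w 0 then 1 else 0) • ((if w 0 then hQm else hPm).map Polynomial.C) := by
      cases w 0 <;>
        · ext i j
          fin_cases i <;> fin_cases j <;>
            simp [hQm, hPm, Matrix.map_apply, Matrix.smul_apply, Polynomial.smul_eq_C_mul]
    rw [hfirst, smul_mul_smul_comm, ← pow_add, ← Matrix.map_mul]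

/-- coefficient extraction: entries of hNm^k -/
lemma coeff_pow_entry (k n : ℕ) (i j : Fin 2) :
    ((hNm ^ k) i j).coeff n
      = ∑ w ∈ Finset.univ.filter
          (fun w : Fin k → Bool => (Finset.univ.filter fun i => w i = true).card = n),
        ((List.ofFn fun i : Fin k => if w i then hQm else hPm).prod) i j := by
  have expand : hNm ^ k = ∑ w : Fin k → Bool,
      (List.ofFn fun i => if w i then (!![0,0;X,-X] : Matrix (Fin 2) (Fin 2) ℝ[X])
        else !![1,1;0,0]).prod := by
    rw [sum_words (fun b => if b then (!![0,0;X,-X] : Matrix (Fin 2) (Fin 2) ℝ[X])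
      else !![1,1;0,0]) k]
    norm_num [hNm]
  rw [expand]
  rw [Matrix.sum_apply]
  rw [Finset.sum_filter]
  rw [finset_sum_coeff]
  apply Finset.sum_congr rfl
  intro w _
  rw [word_factor k w]
  rw [Matrix.smul_apply, Matrix.map_apply, smul_eq_mul, mul_comm,
    Polynomial.C_mul_X_pow_eq_monomial, Polynomial.coeff_monomial]


/-- the R-functional and S-functional of hNm^k -/
def hu (k : ℕ) : ℝ[X] := (hNm ^ k) 0 0 - (hNm ^ k) 0 1
def hv (k : ℕ) : ℝ[X] := (hNm ^ k) 1 0 + (hNm ^ k) 1 1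

lemma hNm_sq : hNm ^ 2 = (1 - X : ℝ[X]) • hNm + ((2 : ℝ[X]) * X) • (1 : Matrix (Fin 2) (Fin 2) ℝ[X]) := by
  ext i j
  fin_cases i <;> fin_cases j <;>
    simp [hNm, pow_two, Matrix.mul_apply, Fin.sum_univ_two, Matrix.smul_apply, Matrix.one_apply,
      smul_eq_mul] <;> ring_nf <;> simp [coeff_sub, sub_eq_iff_eq_add] <;> ring

lemma hNm_rec (k : ℕ) : hNm ^ (k + 2)
    = (1 - X : ℝ[X]) • hNm ^ (k+1) + ((2 : ℝ[X]) * X) • hNm ^ k := by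
  have : hNm ^ (k+2) = hNm ^ k * hNm ^ 2 := by rw [← pow_add]
  rw [this, hNm_sq, mul_add, mul_smul_comm, mul_smul_comm, mul_one, ← pow_succ]

lemma hu_rec (k : ℕ) : hu (k + 2) = (1 - X) * hu (k+1) + 2 * X * hu k := by
  simp only [hu, hNm_rec k, Matrix.add_apply, Matrix.smul_apply, smul_eq_mul]
  ring

lemma hv_rec (k : ℕ) : hv (k + 2) = (1 - X) * hv (k+1) + 2 * X * hv k := by
  simp only [hv, hNm_rec k, Matrix.add_apply, Matrix.smul_apply, smul_eq_mul]
  ring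

lemma hu_zero : hu 0 = 1 := by simp [hu, Matrix.one_apply]
lemma hv_zero : hv 0 = 1 := by simp [hv, Matrix.one_apply]
lemma hu_one : hu 1 = 0 := by simp [hu, hNm]
lemma hv_one : hv 1 = 0 := by simp [hv, hNm]

lemma hu_eq_hv (k : ℕ) : hu k = hv k := by
  induction k using Nat.twoStepInduction with
  | zero => rw [hu_zero, hv_zero]
  | one => rw [hu_one, hv_one]
  | more k ih1 ih2 => rw [hu_rec, hv_rec, ih1, ih2]

lemma hu_two : hu 2 = 2 * X := by
  have := hu_rec 0
  rw [hu_zero, hu_one] at this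
  rw [this]; ring

lemma hu_three : hu 3 = 2 * X - 2 * X^2 := by
  have := hu_rec 1
  rw [hu_one, hu_two] at this
  rw [this]; ring


/-- hh a b = coeff b of (1+X)^a (X-1)^b -/
def hh (a b : ℕ) : ℝ := (((1 + X) ^ a * (X - 1) ^ b : ℝ[X])).coeff b

lemma hh_rec (a b : ℕ) : hh (a+1) (b+1) = hh a (b+1) + hh (a+1) b - 2 * hh a b := by
  set F : ℝ[X] := (1 + X) ^ a * (X - 1) ^ b with hF
  have e1 : ((1 + X) ^ (a+1) * (X - 1) ^ (b+1) : ℝ[X]) = F * X ^ 2 - F := by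
    rw [hF]; ring
  have e2 : ((1 + X) ^ a * (X - 1) ^ (b+1) : ℝ[X]) = F * X - F := by rw [hF]; ring
  have e3 : ((1 + X) ^ (a+1) * (X - 1) ^ b : ℝ[X]) = F + F * X := by rw [hF]; ring
  simp only [hh, e1, e2, e3, Polynomial.coeff_sub, Polynomial.coeff_add]
  rw [Polynomial.coeff_mul_X]
  cases b with
  | zero =>
    have h1 : (F * X ^ 2).coeff 1 = 0 := by simp [Polynomial.coeff_mul_X_pow']
    rw [h1]
    simp only [hF, pow_zero, mul_one]
    ring_nf
    simp [Polynomial.coeff_zero_eq_eval_zero]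
  | succ b' =>
    have h1 : (F * X ^ 2).coeff (b' + 1 + 1) = F.coeff b' := by
      have := Polynomial.coeff_mul_X_pow F 2 b'
      simpa using this
    have h2 : (F * X).coeff (b' + 1) = F.coeff b' := Polynomial.coeff_mul_X F b'
    rw [h1, h2]
    ring

lemma hh_left_zero (b : ℕ) : hh 0 b = 1 := by
  simp only [hh, pow_zero, one_mul]
  have : ((X - 1 : ℝ[X])) = X + Polynomial.C (-1) := by simp [sub_eq_add_neg]
  rw [this, Polynomial.coeff_X_add_C_pow]
  simp

lemma hh_right_zero (a : ℕ) : hh a 0 = 1 := by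
  simp [hh, Polynomial.coeff_zero_eq_eval_zero]

/-- the coefficient function: Hc k j is coeff j of hu k for k ≥ 2 -/
def Hc (k j : ℕ) : ℝ :=
  if 1 ≤ j ∧ j ≤ k - 1 then 2 * (-1:ℝ)^(j-1) * hh (k-1-j) (j-1) else 0

lemma Hc_rec (k m : ℕ) :
    Hc (k+4) (m+1) = Hc (k+3) (m+1) - Hc (k+3) m + 2 * Hc (k+2) m := by
  rcases Nat.lt_or_ge m 1 with hm | hm
  · -- m = 0
    interval_cases m
    simp only [Hc]
    rw [if_pos (by omega), if_pos (by omega), if_neg (by omega), if_neg (by omega)]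
    simp [hh_right_zero]
  rcases Nat.lt_or_ge m (k+2) with hmk | hmk
  · -- interior: 1 ≤ m ≤ k+1
    simp only [Hc]
    rw [if_pos (by omega), if_pos (by omega), if_pos (by omega), if_pos (by omega)]
    have ha : k + 4 - 1 - (m+1) = (k + 1 - m) + 1 := by omega
    have hb : k + 3 - 1 - (m+1) = k + 1 - m := by omega
    have hc : k + 3 - 1 - m = (k + 1 - m) + 1 := by omega
    have hd : k + 2 - 1 - m = k + 1 - m := by omega
    rw [ha, hb, hc, hd]
    obtain ⟨m', rfl⟩ : ∃ m', m = m' + 1 := ⟨m - 1, by omega⟩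
    have he : m' + 1 + 1 - 1 = m' + 1 := by omega
    have hf : m' + 1 - 1 = m' := by omega
    rw [he, hf, hh_rec (k + 1 - (m'+1)) m']
    have hsgn : ((-1:ℝ))^(m'+1) = -(-1:ℝ)^m' := by rw [pow_succ]; ring
    rw [hsgn]
    ring
  rcases Nat.lt_or_ge m (k+3) with hmk2 | hmk2
  · -- m = k+2
    have : m = k + 2 := by omega
    subst this
    simp only [Hc]
    rw [if_pos (by omega), if_neg (by omega), if_pos (by omega), if_neg (by omega)]
    have h1 : k + 4 - 1 - (k + 2 + 1) = 0 := by omega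
    have h2 : k + 3 - 1 - (k + 2) = 0 := by omega
    have h3 : k + 2 + 1 - 1 = k + 2 := by omega
    have h4 : k + 2 - 1 = k + 1 := by omega
    rw [h1, h2, h3, h4, hh_left_zero, hh_left_zero]
    rw [pow_succ]
    ring
  · -- m ≥ k+3 : everything zero
    simp only [Hc]
    rw [if_neg (by omega), if_neg (by omega), if_neg (by omega), if_neg (by omega)]
    ring


lemma hu_coeff : ∀ k j, (hu (k+2)).coeff j = Hc (k+2) j := by
  intro k
  induction k using Nat.twoStepInduction with
  | zero =>
    intro j
    rw [hu_two]
    rcases j with _ | _ | j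
    · simp [Hc]
    · simp only [Hc]
      rw [if_pos (by omega)]
      simp [hh_right_zero]
    · simp only [Hc]
      rw [if_neg (by omega)]
      simp only [Polynomial.coeff_ofNat_mul, Polynomial.coeff_X]
      rw [if_neg (by omega)]
      norm_num
  | one =>
    intro j
    rw [hu_three]
    rcases j with _ | _ | _ | j
    · simp [Hc]
    · simp only [Hc]
      rw [if_pos (by omega)]
      simp only [Polynomial.coeff_sub]
      norm_num [Polynomial.coeff_X, hh_right_zero, Polynomial.coeff_X_pow]
    · simp only [Hc]
      rw [if_pos (by omega)]
      simp only [Polynomial.coeff_sub]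
      norm_num [Polynomial.coeff_X, Polynomial.coeff_X_pow]
      rw [hh_left_zero]
    · simp only [Hc]
      rw [if_neg (by omega)]
      simp only [Polynomial.coeff_sub]
      simp only [Polynomial.coeff_ofNat_mul, Polynomial.coeff_X, Polynomial.coeff_X_pow]
      rw [if_neg (by omega), if_neg (by omega)]
      norm_num
  | more k ih1 ih2 =>
    intro j
    have hrec := hu_rec (k+2)
    have e : (1 - X) * hu (k+3) + 2 * X * hu (k+2)
        = hu (k+3) - X * hu (k+3) + 2 * (X * hu (k+2)) := by ring
    rw [show k+2+2 = k+4 by omega, show k+2+1 = k+3 by omega] at hrec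
    rw [hrec, e]
    rcases j with _ | m
    · simp only [Polynomial.coeff_add, Polynomial.coeff_sub]
      rw [Polynomial.coeff_zero_eq_eval_zero (X * hu (k+3)),
        Polynomial.coeff_zero_eq_eval_zero (2 * (X * hu (k+2)))]
      simp only [Polynomial.eval_mul, Polynomial.eval_X, zero_mul, mul_zero,
        Polynomial.eval_ofNat, sub_zero, add_zero]
      rw [show k+3 = k+1+2 by omega, ih2]
      simp [Hc]
    · rw [Polynomial.coeff_add, Polynomial.coeff_sub, Polynomial.coeff_X_mul]
      have h2 : (2 * (X * hu (k+2))).coeff (m+1) = 2 * (hu (k+2)).coeff m := by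
        rw [Polynomial.coeff_ofNat_mul, Polynomial.coeff_X_mul]
      rw [h2]
      rw [show k+3 = k+1+2 by omega]
      simp only [ih1, ih2]
      rw [show k+1+2 = k+3 by omega, show k+2+2 = k+4 by omega]
      exact (Hc_rec k m).symm

lemma hu_coeff_diag (n : ℕ) (hn : 1 ≤ n) :
    (hu (2*n)).coeff n = 2 * (-1:ℝ)^(n-1) * hh (n-1) (n-1) := by
  rw [show 2*n = (2*n-2)+2 by omega, hu_coeff]
  simp only [Hc]
  rw [if_pos (by constructor <;> omega)]
  congr 2
  omega

lemma hh_diag (m : ℕ) :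
    hh m m = ∑ i ∈ range (m+1), (-1:ℝ)^i * ((m.choose i : ℝ))^2 := by
  rw [hh, Polynomial.coeff_mul, Finset.Nat.sum_antidiagonal_eq_sum_range_succ_mk]
  apply Finset.sum_congr rfl
  intro k hk
  have hkm : k ≤ m := by simpa [Nat.lt_succ_iff] using hk
  rw [Polynomial.coeff_one_add_X_pow,
    show ((X - 1 : ℝ[X])) = X + Polynomial.C (-1) by simp [sub_eq_add_neg],
    Polynomial.coeff_X_add_C_pow]
  rw [show m - (m - k) = k by omega, Nat.choose_symm hkm]
  ring

lemma target_sum (n : ℕ) (hn : 1 ≤ n) :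
    ∑ γ ∈ Finset.Icc 1 n, (-1 : ℝ) ^ (n - γ) * ((n - 1).choose (γ - 1) : ℝ) ^ 2
      = (-1:ℝ)^(n-1) * hh (n-1) (n-1) := by
  obtain ⟨m, rfl⟩ : ∃ m, n = m + 1 := ⟨n - 1, by omega⟩
  rw [← Finset.Ico_add_one_right_eq_Icc, Finset.sum_Ico_eq_sum_range]
  simp only [show m+1+1-1 = m+1 by omega, Nat.add_sub_cancel]
  rw [hh_diag]
  rw [Finset.mul_sum]
  apply Finset.sum_congr rfl
  intro i hi
  have him : i ≤ m := by simpa [Nat.lt_succ_iff] using hi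
  rw [show m+1-(1+i) = m - i by omega, show 1+i-1 = i by omega]
  have hsg : ((-1:ℝ))^m * (-1:ℝ)^i = (-1:ℝ)^(m - i) := by
    rw [← pow_add, show m + i = (m - i) + 2*i by omega, pow_add, pow_mul]
    norm_num
  rw [← hsg]
  ring


lemma smul_list_prod : ∀ (k : ℕ) (r : ℝ) (g : Fin k → Matrix (Fin 2) (Fin 2) ℝ),
    (List.ofFn fun i => r • g i).prod = r ^ k • (List.ofFn g).prod := by
  intro k
  induction k with
  | zero => intro r g; simp
  | succ k ih =>
    intro r g
    rw [List.ofFn_succ, List.ofFn_succ, List.prod_cons, List.prod_cons,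
      ih r (fun i => g i.succ), smul_mul_smul_comm, ← pow_succ']

end HadamardAux

section Assembly
open Polynomial Finset


lemma xi_entry (n : ℕ) (i j : Fin 2) :
    hadamardXi n i j
      = (1 / Real.sqrt 2) ^ (2*n) * ((hNm ^ (2*n)) i j).coeff n := by
  rw [coeff_pow_entry, Finset.mul_sum]
  unfold hadamardXi
  rw [Matrix.sum_apply]
  apply Finset.sum_congr rfl
  intro w hw
  have hfun : (fun i : Fin (2*n) =>
        if w i then !![(0:ℝ),0;1/Real.sqrt 2, -(1/Real.sqrt 2)]
        else !![(1/Real.sqrt 2 : ℝ), 1/Real.sqrt 2;0,0])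
      = fun i => (1/Real.sqrt 2) • (if w i then hQm else hPm) := by
    funext i
    cases hwi : w i <;>
      · ext a b
        fin_cases a <;> fin_cases b <;> simp [hQm, hPm, Matrix.smul_apply, mul_comm]
  rw [hfun, smul_list_prod, Matrix.smul_apply, smul_eq_mul]

lemma trace_R (n : ℕ) :
    ((!![(1 / Real.sqrt 2 : ℝ), -(1 / Real.sqrt 2); 0, 0])ᵀ * hadamardXi n).trace
      = (1/Real.sqrt 2) * ((1 / Real.sqrt 2) ^ (2*n) * ((hu (2*n)).coeff n)) := by
  rw [Matrix.trace_fin_two]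
  simp only [Matrix.mul_apply, Fin.sum_univ_two, Matrix.transpose_apply]
  rw [xi_entry, xi_entry, xi_entry, xi_entry]
  simp only [hu, Polynomial.coeff_sub]
  norm_num
  ring

lemma trace_S (n : ℕ) :
    ((!![(0 : ℝ), 0; 1 / Real.sqrt 2, 1 / Real.sqrt 2])ᵀ * hadamardXi n).trace
      = (1/Real.sqrt 2) * ((1 / Real.sqrt 2) ^ (2*n) * ((hv (2*n)).coeff n)) := by
  rw [Matrix.trace_fin_two]
  simp only [Matrix.mul_apply, Fin.sum_univ_two, Matrix.transpose_apply]
  rw [xi_entry, xi_entry, xi_entry, xi_entry]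
  simp only [hv, Polynomial.coeff_add]
  norm_num
  ring

end Assembly

theorem hadamard_xi_R_coefficient (n : ℕ) (hn : 1 ≤ n) :
    let R : Matrix (Fin 2) (Fin 2) ℝ := !![(1 / Real.sqrt 2 : ℝ), -(1 / Real.sqrt 2); 0, 0]
    let S : Matrix (Fin 2) (Fin 2) ℝ := !![(0 : ℝ), 0; 1 / Real.sqrt 2, 1 / Real.sqrt 2]
    (Rᵀ * hadamardXi n).trace =
        (1 / Real.sqrt 2) ^ (2 * n - 1) *
          ∑ γ ∈ Finset.Icc 1 n, (-1 : ℝ) ^ (n - γ) * ((n - 1).choose (γ - 1) : ℝ) ^ 2 ∧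
      (Rᵀ * hadamardXi n).trace = (Sᵀ * hadamardXi n).trace := by
  intro R S
  constructor
  · rw [trace_R, target_sum n hn, hu_coeff_diag n hn]
    have h2 : ((1:ℝ)/Real.sqrt 2)^2 * 2 = 1 := by
      rw [div_pow, one_pow, Real.sq_sqrt (by norm_num : (2:ℝ) ≥ 0)]
      norm_num
    have hpow : ((1:ℝ)/Real.sqrt 2) * (1/Real.sqrt 2)^(2*n)
        = (1/Real.sqrt 2)^(2*n-1) * (1/Real.sqrt 2)^2 := by
      rw [← pow_add, ← pow_succ']
      congr 1
      omega
    calc (1/Real.sqrt 2) * ((1 / Real.sqrt 2) ^ (2*n)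
            * (2 * (-1:ℝ)^(n-1) * hh (n-1) (n-1)))
        = ((1/Real.sqrt 2) * (1/Real.sqrt 2)^(2*n)) * 2
            * ((-1:ℝ)^(n-1) * hh (n-1) (n-1)) := by ring
      _ = (1/Real.sqrt 2)^(2*n-1) * ((1/Real.sqrt 2)^2 * 2)
            * ((-1:ℝ)^(n-1) * hh (n-1) (n-1)) := by rw [hpow]; ring
      _ = (1/Real.sqrt 2)^(2*n-1) * ((-1:ℝ)^(n-1) * hh (n-1) (n-1)) := by
            rw [h2]; ring
  · rw [trace_R, trace_S, hu_eq_hv]
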